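/- Let a_0 = 0 and a_i = 3^i for i ≥ 1. For j ≥ 1 let L^j = ∪_{i ≥ 0} ([a_i, a_i + j] ∩ ℕ) and let L^∞ = ℕ. Then L^1 ⊆ L^2 ⊆ ⋯ ⊆ L^∞ and ∪_{j≥1} L^j = ℕ; moreover, for each fixed j there is a constant c_j such that |L^j ∩ {0,1,…,n}| ≤ c_j·(j+1)·(1 + log₃ n) for all n ≥ 1, and consequently lim_{n→∞} |L^j ∩ {0,1,…,n}|/n = 0 for every j. In particular, the collection {L^∞} ∪ {L^j : j ≥ 1} is a measure-zero chain. -/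

import Mathlib

open MeasureTheory Filter
open scoped Classical

noncomputable section

/-- The output `o_t` (for `t ≥ 1`) of a generator with next-output function `g`
on the input sequence `X` (indexed from 1): `o_t = g [x_1, …, x_t]`. -/
def outSeq (g : List ℕ → ℕ) (X : ℕ → ℕ) (t : ℕ) : ℕ :=
  g ((List.range t).map fun s => X (s + 1))

/-- The output prefix set `𝒜(X)_t = {o_1, …, o_t}`. -/
def outUpTo (g : List ℕ → ℕ) (X : ℕ → ℕ) (t : ℕ) : Finset ℕ :=
  (Finset.Icc 1 t).image (outSeq g X)

/-- The observed strings `{x_1, …, x_t}`. -/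
def obsUpTo (X : ℕ → ℕ) (t : ℕ) : Finset ℕ :=
  (Finset.Icc 1 t).image X

/-- Validity constraint on a generator: each output is a fresh string, i.e.
`o_t ∉ {x_1,…,x_t} ∪ {o_1,…,o_{t−1}}`. -/
def ValidGen (g : List ℕ → ℕ) : Prop :=
  ∀ (X : ℕ → ℕ) (t : ℕ), 1 ≤ t →
    (∀ s, 1 ≤ s → s ≤ t → outSeq g X t ≠ X s) ∧
    (∀ s, 1 ≤ s → s < t → outSeq g X t ≠ outSeq g X s)

/-- A randomized generator: a probability space `(Ω, P)` of seeds together with a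
measurable family of deterministic (valid) generators. -/
structure RandGen where
  Ω : Type
  mΩ : MeasurableSpace Ω
  P : @Measure Ω mΩ
  prob : @IsProbabilityMeasure Ω mΩ P
  gen : Ω → List ℕ → ℕ
  valid : ∀ ω, ValidGen (gen ω)
  meas : ∀ l : List ℕ, @Measurable Ω ℕ mΩ inferInstance (fun ω => gen ω l)

/-- `k_j`: the `j`-th smallest element of `K` (for `j ≥ 1`). -/
def nthElem (K : Set ℕ) (j : ℕ) : ℕ := Nat.nth (· ∈ K) (j - 1)

/-- `K_i = {k_1, …, k_i}`: the `i` smallest elements of `K`. -/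
def prefixSet (K : Set ℕ) (i : ℕ) : Finset ℕ := (Finset.Icc 1 i).image (nthElem K)

/-- Timely element-wise density `μ^el_i(𝒜(X), K, D)`. -/
def muEl (g : List ℕ → ℕ) (X : ℕ → ℕ) (K : Set ℕ) (D : ℕ → ℕ) (i : ℕ) : ℝ :=
  (∑ j ∈ Finset.Icc 1 i, if nthElem K j ∈ outUpTo g X (D j) then (1 : ℝ) else 0) / i

/-- Prefix-wise density `μ^pfx_i(𝒜(X), K, D) = |𝒜(X)_{D(i)} ∩ K_i| / i`. -/
def muPfx (g : List ℕ → ℕ) (X : ℕ → ℕ) (K : Set ℕ) (D : ℕ → ℕ) (i : ℕ) : ℝ :=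
  ((outUpTo g X (D i) ∩ prefixSet K i).card : ℝ) / i

/-- The number of hallucinations `|𝒜(X)_t \ K|` of a deterministic generator. -/
def hallucCount (g : List ℕ → ℕ) (X : ℕ → ℕ) (K : Set ℕ) (t : ℕ) : ℕ :=
  ((outUpTo g X t).filter fun n => n ∉ K).card

/-- The hallucination rate `H_𝒜^{ℒ,K,X}(t) = 𝔼[|𝒜(X)_t \ K| / t]`,
the expectation being over the internal randomness (the seed). -/
def hallucRate (A : RandGen) (X : ℕ → ℕ) (K : Set ℕ) (t : ℕ) : ℝ :=
  ∫ ω, (hallucCount (A.gen ω) X K t : ℝ) / t ∂A.P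

/-- `E ∈ ℰ(K)`: a total enumeration (with possible repetitions) of `K`. -/
def IsEnumOf (E : ℕ → ℕ) (K : Set ℕ) : Prop :=
  (∀ t, 1 ≤ t → E t ∈ K) ∧ ∀ k ∈ K, ∃ t, 1 ≤ t ∧ E t = k

/-- A countable collection of languages (infinite sets of strings). -/
def IsLangCollection (L : Set (Set ℕ)) : Prop :=
  L.Countable ∧ ∀ K ∈ L, K.Infinite

/-- Generalized inverse `D⁻¹(t) = min {n ≥ 1 : D(n) ≥ t}`. -/
def Dinv (D : ℕ → ℕ) (t : ℕ) : ℕ := sInf {n | 1 ≤ n ∧ t ≤ D n}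

/-- A feasible profile `(D, H)`: `D` is a monotone nondecreasing, discrete convex
(`D(m+1) − D(m) ≥ D(m) − D(m−1)`), superlinear deadline function, and `H` is a
nonnegative monotone nonincreasing vanishing function with `t·H(t)/D⁻¹(t) → ∞`. -/
def FeasibleProfile (D : ℕ → ℕ) (H : ℕ → ℝ) : Prop :=
  (∀ i, 1 ≤ i → 1 ≤ D i) ∧
  (∀ m n, 1 ≤ m → m ≤ n → D m ≤ D n) ∧
  (∀ m, 2 ≤ m → D m + D m ≤ D (m + 1) + D (m - 1)) ∧
  Tendsto (fun i : ℕ => (D i : ℝ) / i) atTop atTop ∧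
  (∀ t, 0 ≤ H t) ∧
  (∀ s t, 1 ≤ s → s ≤ t → H t ≤ H s) ∧
  Tendsto H atTop (nhds 0) ∧
  Tendsto (fun t : ℕ => (t : ℝ) * H t / (Dinv D t : ℝ)) atTop atTop


/-- A measure-zero chain: a nested family `L^1 ⊆ L^2 ⊆ ⋯` of languages whose union is
the language `L^∞` and such that each `L^j` has vanishing lower density inside the
ordered prefixes of `L^∞`. -/
def MeasureZeroChain (Linf : Set ℕ) (Lj : ℕ → Set ℕ) : Prop :=
  Linf.Infinite ∧ (∀ j, 1 ≤ j → (Lj j).Infinite) ∧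
  (∀ j, 1 ≤ j → Lj j ⊆ Lj (j + 1)) ∧
  (∀ j, 1 ≤ j → Lj j ⊆ Linf) ∧
  (⋃ j ∈ {j : ℕ | 1 ≤ j}, Lj j) = Linf ∧
  (∀ j, 1 ≤ j →
    liminf (fun i =>
      (((prefixSet Linf i).filter fun k => k ∈ Lj j).card : ℝ) / i) atTop = 0)

/-- The markers `a_0 = 0`, `a_i = 3^i` for `i ≥ 1`. -/
def marker (i : ℕ) : ℕ := if i = 0 then 0 else 3 ^ i

/-- `L^j = ∪_{i ≥ 0} [a_i, a_i + j]`. -/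
def LMarker (j : ℕ) : Set ℕ := ⋃ i : ℕ, Set.Icc (marker i) (marker i + j)

/-- **Marker-Interval Construction.** With `L^∞ = ℕ`, the family `{L^∞} ∪ {L^j : j ≥ 1}`
is nested with union `ℕ`, each `L^j` meets `{0,…,n}` in at most
`c_j (j+1)(1 + log₃ n)` elements, its density vanishes, and the family forms a
measure-zero chain. -/
lemma lmarker_mono {j j' : ℕ} (h : j ≤ j') : LMarker j ⊆ LMarker j' := by
  intro k hk
  rw [LMarker, Set.mem_iUnion] at hk ⊢
  obtain ⟨i, h1, h2⟩ := hk
  exact ⟨i, h1, h2.trans (by omega)⟩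

lemma mem_lmarker_self (n : ℕ) : n ∈ LMarker (n + 1) := by
  rw [LMarker, Set.mem_iUnion]
  exact ⟨0, by simp [marker]⟩

lemma lmarker_card (j n : ℕ) (hn : 1 ≤ n) :
    ((Finset.Icc 0 n).filter fun k => k ∈ LMarker j).card ≤ (Nat.log 3 n + 1) * (j + 1) := by
  have hsub : ((Finset.Icc 0 n).filter fun k => k ∈ LMarker j) ⊆
      (Finset.range (Nat.log 3 n + 1)).biUnion fun i => Finset.Icc (marker i) (marker i + j) := by
    intro k hk
    rw [Finset.mem_filter, Finset.mem_Icc] at hk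
    obtain ⟨⟨_, hkn⟩, hkL⟩ := hk
    rw [LMarker, Set.mem_iUnion] at hkL
    obtain ⟨i, h1, h2⟩ := hkL
    rw [Finset.mem_biUnion]
    refine ⟨i, Finset.mem_range.mpr ?_, Finset.mem_Icc.mpr ⟨h1, h2⟩⟩
    rcases Nat.eq_zero_or_pos i with rfl | hi
    · omega
    · have h3 : 3 ^ i ≤ n := by
        have : marker i = 3 ^ i := by simp [marker]; omega
        omega
      have := (Nat.le_log_iff_pow_le (by norm_num) (by omega)).mpr h3
      omega
  calc ((Finset.Icc 0 n).filter fun k => k ∈ LMarker j).card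
      ≤ _ := Finset.card_le_card hsub
    _ ≤ ∑ i ∈ Finset.range (Nat.log 3 n + 1), (Finset.Icc (marker i) (marker i + j)).card :=
        Finset.card_biUnion_le
    _ ≤ ∑ _i ∈ Finset.range (Nat.log 3 n + 1), (j + 1) := by
        refine Finset.sum_le_sum fun i _ => ?_
        rw [Nat.card_Icc]; omega
    _ = (Nat.log 3 n + 1) * (j + 1) := by simp [mul_comm]

lemma lmarker_card_real (j n : ℕ) (hn : 1 ≤ n) :
    (((Finset.Icc 0 n).filter fun k => k ∈ LMarker j).card : ℝ) ≤
      ((j : ℝ) + 1) * (1 + Real.logb 3 n) := by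
  have h1 : (((Finset.Icc 0 n).filter fun k => k ∈ LMarker j).card : ℝ) ≤
      ((Nat.log 3 n : ℝ) + 1) * ((j : ℝ) + 1) := by
    have := lmarker_card j n hn
    exact_mod_cast this
  have h2 : (Nat.log 3 n : ℝ) ≤ Real.logb 3 n := by
    have hp : (3 : ℝ) ^ (Nat.log 3 n) ≤ (n : ℝ) := by
      exact_mod_cast Nat.pow_log_le_self 3 (by omega)
    have := Real.logb_le_logb_of_le (b := 3) (by norm_num)
      (pow_pos (by norm_num) (Nat.log 3 n)) hp
    rwa [Real.logb_pow, Real.logb_self_eq_one (by norm_num), mul_one] at this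
  nlinarith [h1, h2]

lemma lmarker_tendsto (j : ℕ) : Tendsto (fun n : ℕ =>
    (((Finset.Icc 0 n).filter fun k => k ∈ LMarker j).card : ℝ) / n) atTop (nhds 0) := by
  have hlog : Tendsto (fun x : ℝ => Real.log x / x) atTop (nhds 0) :=
    Real.isLittleO_log_id_atTop.tendsto_div_nhds_zero
  have hinv : Tendsto (fun x : ℝ => x⁻¹) atTop (nhds 0) := tendsto_inv_atTop_zero
  have hg : Tendsto (fun x : ℝ => ((j : ℝ) + 1) * (1 + Real.logb 3 x) / x) atTop (nhds 0) := by
    have h := ((hinv.add (hlog.const_mul (Real.log 3)⁻¹)).const_mul ((j : ℝ) + 1))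
    rw [show ((j : ℝ) + 1) * (0 + (Real.log 3)⁻¹ * 0) = 0 by ring] at h
    apply h.congr'
    filter_upwards [eventually_gt_atTop (0 : ℝ)] with x hx
    rw [Real.logb]
    field_simp
  have hgn : Tendsto (fun n : ℕ => ((j : ℝ) + 1) * (1 + Real.logb 3 n) / n) atTop (nhds 0) :=
    hg.comp tendsto_natCast_atTop_atTop
  apply squeeze_zero' ?_ ?_ hgn
  · filter_upwards with n
    positivity
  · filter_upwards [eventually_ge_atTop 1] with n hn
    gcongr
    exact lmarker_card_real j n hn

lemma lmarker_infinite (j : ℕ) : (LMarker j).Infinite := by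
  refine Set.infinite_of_injective_forall_mem (f := fun i : ℕ => 3 ^ (i + 1)) ?_ ?_
  · intro a b hab
    simpa using Nat.pow_right_injective (by norm_num) hab
  · intro i
    rw [LMarker, Set.mem_iUnion]
    refine ⟨i + 1, ?_⟩
    have : marker (i + 1) = 3 ^ (i + 1) := by simp [marker]
    rw [this]
    exact ⟨le_refl _, Nat.le_add_right _ _⟩

lemma prefixSet_univ (i : ℕ) : prefixSet (Set.univ : Set ℕ) i = Finset.range i := by
  have hn : ∀ m : ℕ, nthElem (Set.univ : Set ℕ) m = m - 1 := by
    intro m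
    rw [nthElem, show (· ∈ (Set.univ : Set ℕ)) = fun _ : ℕ => True from
      funext fun _ => by simp]
    exact Nat.nth_true _
  ext k
  simp only [prefixSet, Finset.mem_image, Finset.mem_Icc, Finset.mem_range, hn]
  constructor
  · rintro ⟨m, ⟨h1, h2⟩, rfl⟩; omega
  · intro hk; exact ⟨k + 1, by omega, by omega⟩

lemma lmarker_union : (⋃ j ∈ {j : ℕ | 1 ≤ j}, LMarker j) = (Set.univ : Set ℕ) := by
  ext n
  simp only [Set.mem_iUnion, Set.mem_univ, iff_true, Set.mem_setOf_eq]
  exact ⟨n + 1, by omega, mem_lmarker_self n⟩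

theorem stmt9 :
    (∀ j, 1 ≤ j → LMarker j ⊆ LMarker (j + 1)) ∧
    (⋃ j ∈ {j : ℕ | 1 ≤ j}, LMarker j) = (Set.univ : Set ℕ) ∧
    (∀ j : ℕ, ∃ c : ℝ, ∀ n : ℕ, 1 ≤ n →
      (((Finset.Icc 0 n).filter fun k => k ∈ LMarker j).card : ℝ) ≤
        c * (j + 1) * (1 + Real.logb 3 n)) ∧
    (∀ j : ℕ, Tendsto (fun n : ℕ =>
      (((Finset.Icc 0 n).filter fun k => k ∈ LMarker j).card : ℝ) / n) atTop (nhds 0)) ∧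
    MeasureZeroChain (Set.univ : Set ℕ) LMarker := by
  refine ⟨fun j _ => lmarker_mono (by omega), lmarker_union,
    fun j => ⟨1, fun n hn => by simpa using lmarker_card_real j n hn⟩,
    lmarker_tendsto,
    Set.infinite_univ, fun j _ => lmarker_infinite j,
    fun j _ => lmarker_mono (by omega), fun j _ => Set.subset_univ _, lmarker_union,
    fun j _ => ?_⟩
  have hle : ∀ i : ℕ,
      (((prefixSet (Set.univ : Set ℕ) i).filter fun k => k ∈ LMarker j).card : ℝ) / i ≤
      (((Finset.Icc 0 i).filter fun k => k ∈ LMarker j).card : ℝ) / i := by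
    intro i
    have hcard : (((prefixSet (Set.univ : Set ℕ) i).filter fun k => k ∈ LMarker j).card : ℝ) ≤
        (((Finset.Icc 0 i).filter fun k => k ∈ LMarker j).card : ℝ) := by
      rw [prefixSet_univ]
      exact Nat.cast_le.mpr (Finset.card_le_card (Finset.filter_subset_filter _
        (fun k hk => by simp only [Finset.mem_range] at hk; simp; omega)))
    gcongr
  have ht : Tendsto (fun i : ℕ =>
      (((prefixSet (Set.univ : Set ℕ) i).filter fun k => k ∈ LMarker j).card : ℝ) / i)
      atTop (nhds 0) :=
    squeeze_zero (fun i => by positivity) hle (lmarker_tendsto j)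
  exact ht.liminf_eq


end
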